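/- Let V be a real inner product space with inner product ⟪·,·⟫ and let g be a symmetric bilinear form on V. Let H ≥ 0 and H₀ > 0 be real numbers such that H²·g(x,x) ≥ H₀²·⟪x,x⟫ for all x ∈ V. Let τ, ν ∈ V satisfy g(τ,τ) = g(ν,ν) = 1 and g(τ,ν) = 0, and let τ̄, ν̄ ∈ V be orthonormal for ⟪·,·⟫. Let A, B be real numbers with H₀ − B > 0 and (H₀ − B)·B − A² ≥ 0, and set W₁ = (A² + (H₀ − B)²)/(H₀·(H₀ − B)) and W₂ = ((H₀ − B)·B − A²)/(H₀·(H₀ − B)). Then W₁ ≥ 0, W₂ ≥ 0, W₁ + W₂ = 1, and H ≥ W₁·(H₀/((H₀ − B)² + A²))·⟪(H₀ − B)·τ + A·ν, (H₀ − B)·τ̄ + A·ν̄⟫ + W₂·H₀·⟪ν, ν̄⟫. -/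

import Mathlib

open RealInnerProductSpace

/-- Key step: scaled Cauchy–Schwarz plus the mean curvature comparison. -/
lemma key_step {V : Type*} [NormedAddCommGroup V] [InnerProductSpace ℝ V]
    (g : LinearMap.BilinForm ℝ V)
    (H H₀ : ℝ) (hH : 0 ≤ H) (hH₀ : 0 < H₀)
    (hcomp : ∀ x : V, H₀ ^ 2 * ⟪x, x⟫ ≤ H ^ 2 * g x x)
    (S : ℝ) (hS : 0 < S) (u ub : V) (hu : g u u = S) (hub : ⟪ub, ub⟫ = S) :
    H₀ * ⟪u, ub⟫ ≤ H * S := by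
  have h1 : ⟪u, ub⟫ ≤ ‖u‖ * ‖ub‖ := real_inner_le_norm u ub
  have h2 : ‖ub‖ ^ 2 = S := by
    rw [← real_inner_self_eq_norm_sq] at *; exact hub
  have h3 : H₀ ^ 2 * ‖u‖ ^ 2 ≤ H ^ 2 * S := by
    have := hcomp u
    rwa [real_inner_self_eq_norm_sq, hu] at this
  have hn : 0 ≤ ‖u‖ := norm_nonneg u
  have hnb : 0 ≤ ‖ub‖ := norm_nonneg ub
  have h4 : H₀ * (‖u‖ * ‖ub‖) ≤ H * S := by
    have ha : 0 ≤ H₀ * (‖u‖ * ‖ub‖) := by positivity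
    have hb : 0 ≤ H * S := mul_nonneg hH hS.le
    have hsq : (H₀ * (‖u‖ * ‖ub‖)) ^ 2 ≤ (H * S) ^ 2 := by
      nlinarith [mul_le_mul_of_nonneg_right h3 (sq_nonneg ‖ub‖)]
    exact (pow_le_pow_iff_left₀ ha hb two_ne_zero).mp hsq
  have := mul_le_mul_of_nonneg_left h1 hH₀.le
  linarith

/-- The weighted intermediate inequality (3.11) in the proof of Lemma 3.2,
obtained by combining two instances of Lemma 3.1 with convex weights `W₁, W₂`. -/
theorem weighted_mean_curvature_comparison
    {V : Type*} [NormedAddCommGroup V] [InnerProductSpace ℝ V]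
    (g : LinearMap.BilinForm ℝ V) (hg : ∀ x y : V, g x y = g y x)
    (H H₀ : ℝ) (hH : 0 ≤ H) (hH₀ : 0 < H₀)
    (hcomp : ∀ x : V, H₀ ^ 2 * ⟪x, x⟫ ≤ H ^ 2 * g x x)
    (τ ν : V) (hττ : g τ τ = 1) (hνν : g ν ν = 1) (hτν : g τ ν = 0)
    (τb νb : V) (hτbτb : ⟪τb, τb⟫ = 1) (hνbνb : ⟪νb, νb⟫ = 1)
    (hτbνb : ⟪τb, νb⟫ = 0)
    (A B : ℝ) (hB : 0 < H₀ - B) (hwc : 0 ≤ (H₀ - B) * B - A ^ 2)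
    (W₁ W₂ : ℝ)
    (hW₁ : W₁ = (A ^ 2 + (H₀ - B) ^ 2) / (H₀ * (H₀ - B)))
    (hW₂ : W₂ = ((H₀ - B) * B - A ^ 2) / (H₀ * (H₀ - B))) :
    0 ≤ W₁ ∧ 0 ≤ W₂ ∧ W₁ + W₂ = 1 ∧
      W₁ * (H₀ / ((H₀ - B) ^ 2 + A ^ 2)) *
          ⟪(H₀ - B) • τ + A • ν, (H₀ - B) • τb + A • νb⟫
        + W₂ * H₀ * ⟪ν, νb⟫ ≤ H := by
  set S : ℝ := (H₀ - B) ^ 2 + A ^ 2 with hSdef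
  have hS : 0 < S := by positivity
  have hden : 0 < H₀ * (H₀ - B) := mul_pos hH₀ hB
  have hW1 : 0 ≤ W₁ := by rw [hW₁]; positivity
  have hW2 : 0 ≤ W₂ := by rw [hW₂]; exact div_nonneg hwc hden.le
  have hsum : W₁ + W₂ = 1 := by
    rw [hW₁, hW₂, ← add_div, div_eq_one_iff_eq hden.ne']; ring
  refine ⟨hW1, hW2, hsum, ?_⟩
  have hgu : g ((H₀ - B) • τ + A • ν) ((H₀ - B) • τ + A • ν) = S := by
    simp only [map_add, map_smul, LinearMap.add_apply, LinearMap.smul_apply,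
      smul_eq_mul, hττ, hνν, hτν, hg ν τ]
    rw [hSdef]; ring
  have hub : ⟪(H₀ - B) • τb + A • νb, (H₀ - B) • τb + A • νb⟫ = S := by
    rw [real_inner_add_add_self, real_inner_smul_left, real_inner_smul_right,
      real_inner_smul_left, real_inner_smul_right, real_inner_smul_left,
      real_inner_smul_right, hτbτb, hνbνb, hτbνb]
    ring
  have k1 : H₀ * ⟪(H₀ - B) • τ + A • ν, (H₀ - B) • τb + A • νb⟫ ≤ H * S :=
    key_step g H H₀ hH hH₀ hcomp S hS _ _ hgu hub
  have k2 : H₀ * ⟪ν, νb⟫ ≤ H * 1 :=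
    key_step g H H₀ hH hH₀ hcomp 1 one_pos ν νb hνν hνbνb
  set I₁ := ⟪(H₀ - B) • τ + A • ν, (H₀ - B) • τb + A • νb⟫
  set I₂ := ⟪ν, νb⟫
  have e1 : W₁ * (H₀ / S) * I₁ = (W₁ / S) * (H₀ * I₁) := by ring
  have e2 : (W₁ / S) * (H₀ * I₁) ≤ (W₁ / S) * (H * S) :=
    mul_le_mul_of_nonneg_left k1 (div_nonneg hW1 hS.le)
  have e3 : (W₁ / S) * (H * S) = W₁ * H := by field_simp
  have e4 : W₂ * H₀ * I₂ ≤ W₂ * H := by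
    have := mul_le_mul_of_nonneg_left k2 hW2
    nlinarith
  calc W₁ * (H₀ / S) * I₁ + W₂ * H₀ * I₂
      ≤ W₁ * H + W₂ * H := by rw [e1]; linarith [e2, e3.le]
    _ = H := by rw [← add_mul, hsum, one_mul]
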